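/- Let n ≥ 4 and let A ∈ PSC_n^{1,1} (primitive symmetric companion matrix with a_{n,1} > 0 and a_{n,n} > 0). Define V₁ = {i ∈ [1,n−1] : a_{n,i} = 0} and m(V₁) as the maximum length of a run of consecutive integers in V₁. Then exp(A) = 2(⌊(m(V₁)+1)/2⌋ + 1). -/

import Mathlib

def IsPrimitive {n : ℕ} (A : Matrix (Fin n) (Fin n) ℝ) : Prop :=
  (∀ i j, 0 ≤ A i j) ∧ ∃ k : ℕ, 0 < k ∧ ∀ i j, 0 < (A ^ k) i j

def ExpIs {n : ℕ} (A : Matrix (Fin n) (Fin n) ℝ) (e : ℕ) : Prop :=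
  IsLeast {k : ℕ | 0 < k ∧ ∀ i j, 0 < (A ^ k) i j} e

/-- A `(0,1)` companion matrix: superdiagonal entries `1` and all other entries
`0` in the first `n-1` rows; last-row entries in `{0,1}`. -/
def IsCompanion {n : ℕ} (C : Matrix (Fin n) (Fin n) ℝ) : Prop :=
  ∀ i j : Fin n,
    if (i : ℕ) + 1 < n then (C i j = if (j : ℕ) = (i : ℕ) + 1 then 1 else 0)
    else (C i j = 0 ∨ C i j = 1)

/-- The set `C_n^{α,ε}` of symmetric companion matrices `C + Cᵀ` with
`c_{n,1} = α` and `c_{n,n} = ε`. -/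
def companionClass (n : ℕ) (hn : 0 < n) (α ε : ℝ) :
    Set (Matrix (Fin n) (Fin n) ℝ) :=
  {A | ∃ C : Matrix (Fin n) (Fin n) ℝ, IsCompanion C ∧
    C ⟨n - 1, by omega⟩ ⟨0, hn⟩ = α ∧ C ⟨n - 1, by omega⟩ ⟨n - 1, by omega⟩ = ε ∧
    A = C + C.transpose}

/-- `mRun S` : the maximum length of a run of consecutive integers contained in
`S` (`0` for the empty set). -/
noncomputable def mRun (S : Set ℕ) : ℕ := sSup {L : ℕ | ∃ a : ℕ, ∀ t, t < L → a + t ∈ S}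

/-- The exponent set of a family of matrices. -/
def expSet {n : ℕ} (X : Set (Matrix (Fin n) (Fin n) ℝ)) : Set ℕ :=
  {e | ∃ A ∈ X, IsPrimitive A ∧ ExpIs A e}


set_option linter.unusedSectionVars false
set_option linter.unnecessarySeqFocus false

open Matrix hiding IsPrimitive
open Finset

lemma pownn {n k : ℕ} {A : Matrix (Fin n) (Fin n) ℝ} (h : ∀ i j, 0 ≤ A i j) :
    ∀ i j, 0 ≤ (A ^ k) i j := by
  induction k with
  | zero => intro i j; by_cases hij : i = j <;> simp [Matrix.one_apply, hij]
  | succ k ih =>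
      intro i j
      rw [pow_succ, Matrix.mul_apply]
      exact Finset.sum_nonneg fun l _ => mul_nonneg (ih i l) (h l j)

lemma mulpos {n : ℕ} {P Q : Matrix (Fin n) (Fin n) ℝ}
    (hP : ∀ i j, 0 ≤ P i j) (hQ : ∀ i j, 0 ≤ Q i j)
    {i l j : Fin n} (h1 : 0 < P i l) (h2 : 0 < Q l j) : 0 < (P * Q) i j := by
  rw [Matrix.mul_apply]
  exact Finset.sum_pos' (fun x _ => mul_nonneg (hP i x) (hQ x j))
    ⟨l, Finset.mem_univ l, mul_pos h1 h2⟩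

lemma mulpos_rev {n : ℕ} {P Q : Matrix (Fin n) (Fin n) ℝ}
    (hP : ∀ i j, 0 ≤ P i j) (hQ : ∀ i j, 0 ≤ Q i j)
    {i j : Fin n} (h : 0 < (P * Q) i j) : ∃ l, 0 < P i l ∧ 0 < Q l j := by
  by_contra hc
  push_neg at hc
  rw [Matrix.mul_apply] at h
  have hz : ∀ l ∈ Finset.univ, P i l * Q l j = 0 := by
    intro l _
    rcases (hP i l).lt_or_eq with h1 | h1
    · have h2 := hc l h1
      have : Q l j = 0 := le_antisymm h2 (hQ l j)
      simp [this]
    · simp [← h1]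
  rw [Finset.sum_eq_zero hz] at h
  exact lt_irrefl 0 h
open Matrix hiding IsPrimitive
open Finset

section Core
variable {n : ℕ} {A : Matrix (Fin n) (Fin n) ℝ} {ℓ : Fin n} {g : Fin n → ℕ}
variable (hnn : ∀ i j, 0 ≤ A i j) (hsym : ∀ i j, A i j = A j i)
variable (hloop : 0 < A ℓ ℓ)
variable (hg0 : ∀ v, g v = 0 ↔ v = ℓ)
variable (hstep : ∀ u v, 0 < A u v → g v ≤ g u + 1)
variable (hdesc : ∀ v, v ≠ ℓ → ∃ w, 0 < A v w ∧ g w + 1 = g v)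
variable (hpar : ∀ u v, 0 < A u v → u ≠ ℓ → v ≠ ℓ → ((u:ℕ) + (v:ℕ)) % 2 = 1)

lemma pownn' {k : ℕ} (h : ∀ i j, 0 ≤ A i j) : ∀ i j, 0 ≤ (A ^ k) i j := by
  induction k with
  | zero => intro i j; by_cases hij : i = j <;> simp [Matrix.one_apply, hij]
  | succ k ih =>
      intro i j
      rw [pow_succ, Matrix.mul_apply]
      exact Finset.sum_nonneg fun l _ => mul_nonneg (ih i l) (h l j)

include hnn in
lemma mulpos' {P Q : Matrix (Fin n) (Fin n) ℝ}
    (hP : ∀ i j, 0 ≤ P i j) (hQ : ∀ i j, 0 ≤ Q i j)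
    {i l j : Fin n} (h1 : 0 < P i l) (h2 : 0 < Q l j) : 0 < (P * Q) i j := by
  rw [Matrix.mul_apply]
  exact Finset.sum_pos' (fun x _ => mul_nonneg (hP i x) (hQ x j))
    ⟨l, Finset.mem_univ l, mul_pos h1 h2⟩

include hnn hg0 hdesc in
lemma reach : ∀ d (v : Fin n), g v = d → 0 < (A ^ d) v ℓ := by
  intro d
  induction d with
  | zero =>
      intro v hv
      have : v = ℓ := (hg0 v).mp hv
      subst this
      simp [Matrix.one_apply]
  | succ d ih =>
      intro v hv
      have hvℓ : v ≠ ℓ := by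
        intro h; rw [h] at hv; rw [(hg0 ℓ).mpr rfl] at hv; omega
      obtain ⟨w, hw1, hw2⟩ := hdesc v hvℓ
      have hgw : g w = d := by omega
      have : (A : Matrix (Fin n) (Fin n) ℝ) ^ (d + 1) = A * A ^ d := by
        rw [← pow_succ']
      rw [this]
      exact mulpos' hnn hnn (pownn' hnn) hw1 (ih w hgw)

include hnn hloop in
lemma loopwalk : ∀ t, 0 < (A ^ t) ℓ ℓ := by
  intro t
  induction t with
  | zero => simp [Matrix.one_apply]
  | succ t ih =>
      rw [pow_succ]
      exact mulpos' hnn (pownn' hnn) hnn ih hloop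

include hnn hsym hloop hg0 hdesc in
lemma upper {k : ℕ} {i j : Fin n} (h : g i + g j ≤ k) : 0 < (A ^ k) i j := by
  have hATA : A.transpose = A := by
    ext a b; exact (hsym b a)
  have hsymk : ∀ (t : ℕ) (a b : Fin n), (A ^ t) a b = (A ^ t) b a := by
    intro t a b
    have := congrFun (congrFun (Matrix.transpose_pow A t) b) a
    simp [Matrix.transpose_apply] at this
    rw [this, hATA]
  have h1 : 0 < (A ^ g i) i ℓ := reach hnn hg0 hdesc (g i) i rfl
  have h2 : 0 < (A ^ g j) ℓ j := by
    rw [hsymk]; exact reach hnn hg0 hdesc (g j) j rfl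
  have hk : k = g i + (k - g i - g j) + g j := by omega
  have hmid : 0 < (A ^ (g i + (k - g i - g j))) i ℓ := by
    rw [pow_add]
    exact mulpos' hnn (pownn' hnn) (pownn' hnn) h1 (loopwalk hnn hloop (k - g i - g j))
  rw [hk, pow_add]
  exact mulpos' hnn (pownn' hnn) (pownn' hnn) hmid h2

include hnn hsym hg0 hstep hpar in
lemma invariant {i0 : Fin n} (hi0 : i0 ≠ ℓ) :
    ∀ k (v : Fin n), 0 < (A ^ k) i0 v →
      (g i0 + g v ≤ k) ∨ (v ≠ ℓ ∧ (k + (i0:ℕ) + (v:ℕ)) % 2 = 0 ∧ g i0 ≤ k + g v) := by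
  intro k
  induction k with
  | zero =>
      intro v hv
      have : v = i0 := by
        by_contra hne
        rw [pow_zero, Matrix.one_apply, if_neg (fun h => hne h.symm)] at hv
        exact lt_irrefl 0 hv
      subst this
      exact Or.inr ⟨hi0, by omega, by omega⟩
  | succ k ih =>
      intro v hv
      rw [pow_succ] at hv
      obtain ⟨u, hu1, hu2⟩ := mulpos_rev (pownn' hnn) hnn hv
      rcases ih u hu1 with hL | ⟨huℓ, hpar2, hmag⟩
      · left
        have := hstep u v hu2
        omega
      · by_cases hvℓ : v = ℓ
        · left
          have hgv : g v = 0 := by rw [hvℓ]; exact (hg0 ℓ).mpr rfl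
          have hgu : g u ≤ g v + 1 := hstep v u (by rw [hsym]; exact hu2)
          omega
        · right
          refine ⟨hvℓ, ?_, ?_⟩
          · have := hpar u v hu2 huℓ hvℓ
            omega
          · have : g u ≤ g v + 1 := hstep v u (by rw [hsym]; exact hu2)
            omega

end Core

/-- For `A ∈ PSC_n^{1,1}` with `n ≥ 4`, letting `V₁` be the set of column
indices `i` of the last row (excluding the last) with `a_{n,i} = 0`, we have
`exp(A) = 2(⌊(m(V₁)+1)/2⌋ + 1)`. (Indices are 0-based here.) -/
theorem exp_PSC_one_one {n : ℕ} (hn : 4 ≤ n)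
    (C A : Matrix (Fin n) (Fin n) ℝ) (hC : IsCompanion C)
    (h1 : C ⟨n - 1, by omega⟩ ⟨0, by omega⟩ = 1)
    (h2 : C ⟨n - 1, by omega⟩ ⟨n - 1, by omega⟩ = 1)
    (hA : A = C + C.transpose) (hprim : IsPrimitive A) :
    ExpIs A (2 * ((mRun {i : ℕ | ∃ h : i < n, i + 1 < n ∧
      A ⟨n - 1, by omega⟩ ⟨i, h⟩ = 0} + 1) / 2 + 1)) := by
  have hnnA : ∀ i j, 0 ≤ A i j := hprim.1
  have hdist : ∀ a b : ℕ, Nat.dist a b = (a - b) + (b - a) := fun a b => rfl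
  set L : Fin n := ⟨n - 1, by omega⟩ with hLdef
  -- basic entry facts
  have hAe : ∀ i j : Fin n, A i j = C i j + C j i := by
    intro i j; rw [hA]; simp [Matrix.add_apply, Matrix.transpose_apply]
  have hC01 : ∀ i j : Fin n, 0 ≤ C i j := by
    intro i j
    have h := hC i j
    split at h
    · rw [h]; split <;> norm_num
    · rcases h with h | h <;> rw [h] <;> norm_num
  have hsup : ∀ i j : Fin n, (i : ℕ) + 1 < n →
      C i j = if (j : ℕ) = (i : ℕ) + 1 then 1 else 0 := by
    intro i j hi
    have h := hC i j
    rwa [if_pos hi] at h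
  have hsymA : ∀ i j : Fin n, A i j = A j i := by
    intro i j; rw [hAe, hAe]; ring
  have F2 : ∀ i j : Fin n, (j : ℕ) = (i : ℕ) + 1 → 0 < A i j := by
    intro i j hj
    have hi : (i : ℕ) + 1 < n := by have := j.isLt; omega
    have hc1 : C i j = 1 := by rw [hsup i j hi, if_pos hj]
    have := hC01 j i
    rw [hAe, hc1]; linarith
  have F1 : ∀ i j : Fin n, (i : ℕ) < n - 1 → (j : ℕ) < n - 1 →
      Nat.dist (i : ℕ) (j : ℕ) ≠ 1 → A i j = 0 := by
    intro i j hi hj hd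
    have hd' := hdist (i : ℕ) (j : ℕ)
    have hc1 : C i j = 0 := by
      rw [hsup i j (by omega), if_neg (by omega)]
    have hc2 : C j i = 0 := by
      rw [hsup j i (by omega), if_neg (by omega)]
    rw [hAe, hc1, hc2]; norm_num
  have Fadj : ∀ i j : Fin n, 0 < A i j → (i : ℕ) < n - 1 → (j : ℕ) < n - 1 →
      Nat.dist (i : ℕ) (j : ℕ) = 1 := by
    intro i j h hi hj
    by_contra hd
    rw [F1 i j hi hj hd] at h
    exact lt_irrefl 0 h
  have F3 : 0 < A L L := by
    have : C L L = 1 := h2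
    rw [hAe, this]; norm_num
  have F4 : 0 < A L ⟨0, by omega⟩ := by
    have hc1 : C L ⟨0, by omega⟩ = 1 := h1
    have hc2 : C ⟨0, by omega⟩ L = 0 := by
      rw [hsup _ _ (by simp; omega)]
      rw [if_neg (by simp [hLdef]; omega)]
    rw [hAe, hc1, hc2]; norm_num
  have F4' : 0 < A L ⟨n - 2, by omega⟩ := by
    have hc1 : C ⟨n - 2, by omega⟩ L = 1 := by
      rw [hsup _ _ (by simp; omega)]
      rw [if_pos (by simp [hLdef]; omega)]
    have := hC01 L ⟨n - 2, by omega⟩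
    rw [hAe, hc1]; linarith
  -- the neighbor set of L (as naturals), and the zero set V
  set NS : Set ℕ := {j : ℕ | ∃ h : j + 1 < n, 0 < A L ⟨j, Nat.lt_of_succ_lt h⟩} with hNSdef
  set V : Set ℕ := {i : ℕ | ∃ h : i < n, i + 1 < n ∧ A L ⟨i, h⟩ = 0} with hVdef
  have h0NS : 0 ∈ NS := ⟨by omega, F4⟩
  have hn2NS : n - 2 ∈ NS := ⟨by omega, F4'⟩
  have hVNS : ∀ i : ℕ, i + 1 < n → (i ∈ V ↔ i ∉ NS) := by
    intro i hi
    constructor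
    · rintro ⟨h, -, hz⟩ ⟨h', hp⟩
      rw [show (⟨i, Nat.lt_of_succ_lt h'⟩ : Fin n) = ⟨i, h⟩ from rfl, hz] at hp
      exact lt_irrefl 0 hp
    · intro hns
      refine ⟨by omega, hi, ?_⟩
      by_contra hz
      have hp : 0 < A L ⟨i, by omega⟩ :=
        lt_of_le_of_ne (hnnA L ⟨i, by omega⟩) (fun h => hz h.symm)
      exact hns ⟨hi, hp⟩
  have hV0 : (0 : ℕ) ∉ V := by
    rw [hVNS 0 (by omega)]; simp [h0NS]
  have hVn2 : (n - 2) ∉ V := by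
    rw [hVNS (n - 2) (by omega)]; simp [hn2NS]
  have hVle : ∀ i ∈ V, 1 ≤ i ∧ i ≤ n - 3 := by
    intro i hi
    obtain ⟨h, hi1, hz⟩ := id hi
    constructor
    · rcases Nat.eq_zero_or_pos i with h0 | h0
      · exact absurd (h0 ▸ hi) hV0
      · exact h0
    · by_contra hgt
      have : i = n - 2 := by omega
      exact hVn2 (this ▸ hi)
  -- run-length facts
  set LSet : Set ℕ := {Len : ℕ | ∃ a : ℕ, ∀ t, t < Len → a + t ∈ V} with hLSdef
  have h0L : 0 ∈ LSet := ⟨0, fun t ht => absurd ht (by omega)⟩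
  have hLBdd : BddAbove LSet := by
    refine ⟨n, fun Len hLen => ?_⟩
    rcases Nat.eq_zero_or_pos Len with h0 | h0
    · omega
    · obtain ⟨a, ha⟩ := hLen
      have := hVle _ (ha (Len - 1) (by omega))
      omega
  set m : ℕ := mRun V with hmdef
  have hmSup : m = sSup LSet := rfl
  have hLm : ∀ Len ∈ LSet, Len ≤ m := fun Len h => hmSup ▸ le_csSup hLBdd h
  set c : ℕ := (m + 1) / 2 with hcdef
  -- the distance function
  set ds : ℕ → Set ℕ := fun v => {d : ℕ | ∃ j ∈ NS, Nat.dist v j = d} with hdsdef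
  have hdsne : ∀ v : ℕ, (ds v).Nonempty := fun v => ⟨Nat.dist v 0, 0, h0NS, rfl⟩
  set gf : Fin n → ℕ := fun v => if (v : ℕ) = n - 1 then 0 else sInf (ds (v : ℕ)) + 1
    with hgfdef
  have hgfL : ∀ v : Fin n, (v : ℕ) = n - 1 → gf v = 0 := by
    intro v hv; simp only [hgfdef, if_pos hv]
  have hgfv : ∀ v : Fin n, (v : ℕ) ≠ n - 1 → gf v = sInf (ds (v : ℕ)) + 1 := by
    intro v hv; simp only [hgfdef, if_neg hv]
  have Hg0 : ∀ v : Fin n, gf v = 0 ↔ v = L := by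
    intro v
    constructor
    · intro h
      by_contra hne
      have hvn : (v : ℕ) ≠ n - 1 := by
        intro hh; exact hne (Fin.ext hh)
      rw [hgfv v hvn] at h; omega
    · intro h; rw [h]; exact hgfL L rfl
  have Hstep : ∀ u v : Fin n, 0 < A u v → gf v ≤ gf u + 1 := by
    intro u v huv
    by_cases hv : (v : ℕ) = n - 1
    · rw [hgfL v hv]; omega
    · rw [hgfv v hv]
      by_cases hu : (u : ℕ) = n - 1
      · have huL : u = L := Fin.ext hu
        have hvNS : (v : ℕ) ∈ NS := by
          refine ⟨by have := v.isLt; omega, ?_⟩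
          have : (⟨(v : ℕ), _⟩ : Fin n) = v := Fin.eta v v.isLt
          rw [this]
          rw [huL] at huv; exact huv
        have : sInf (ds (v : ℕ)) ≤ 0 := Nat.sInf_le ⟨(v : ℕ), hvNS, by rw [hdist]; omega⟩
        omega
      · rw [hgfv u hu]
        have hd1 : Nat.dist (u : ℕ) (v : ℕ) = 1 :=
          Fadj u v huv (by have := u.isLt; omega) (by have := v.isLt; omega)
        obtain ⟨j, hjNS, hjd⟩ := Nat.sInf_mem (hdsne (u : ℕ))
        have : sInf (ds (v : ℕ)) ≤ Nat.dist (v : ℕ) j :=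
          Nat.sInf_le ⟨j, hjNS, rfl⟩
        have htri := hdist (v : ℕ) j
        have h2' := hdist (u : ℕ) j
        have h3' := hdist (u : ℕ) (v : ℕ)
        omega
  have Hdesc : ∀ v : Fin n, v ≠ L → ∃ w, 0 < A v w ∧ gf w + 1 = gf v := by
    intro v hvL
    have hv : (v : ℕ) ≠ n - 1 := fun hh => hvL (Fin.ext hh)
    have hvlt : (v : ℕ) < n - 1 := by have := v.isLt; omega
    obtain ⟨j, hjNS, hjd⟩ := Nat.sInf_mem (hdsne (v : ℕ))
    rcases Nat.eq_zero_or_pos (sInf (ds (v : ℕ))) with hd0 | hdpos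
    · -- v itself is a neighbor of L
      have hvj : (v : ℕ) = j := by
        rw [hd0] at hjd; have := hdist (v : ℕ) j; omega
      refine ⟨L, ?_, ?_⟩
      · obtain ⟨hj1, hjp⟩ := hjNS
        rw [hsymA]
        have : (⟨j, Nat.lt_of_succ_lt hj1⟩ : Fin n) = v := Fin.ext hvj.symm
        rwa [this] at hjp
      · rw [hgfL L rfl, hgfv v hv, hd0]
    · obtain ⟨hj1, hjp⟩ := id hjNS
      have hjvne : j ≠ (v : ℕ) := by
        intro hh
        have := hdist (v : ℕ) j
        omega
      by_cases hjv : j < (v : ℕ)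
      · -- step down
        have hvm : (v : ℕ) - 1 < n := by omega
        have hwn : ((⟨(v : ℕ) - 1, hvm⟩ : Fin n) : ℕ) ≠ n - 1 := by
          show (v : ℕ) - 1 ≠ n - 1; omega
        have hadjw : 0 < A v ⟨(v : ℕ) - 1, hvm⟩ := by
          rw [hsymA]; exact F2 _ _ (by simp; omega)
        refine ⟨⟨(v : ℕ) - 1, hvm⟩, hadjw, ?_⟩
        have hgw := hgfv _ hwn
        have hub2 : gf (⟨(v : ℕ) - 1, hvm⟩ : Fin n) + 1 ≤ gf v := by
          rw [hgw, hgfv v hv]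
          simp only [Fin.val_mk]
          have hmm : sInf (ds ((v : ℕ) - 1)) ≤ sInf (ds (v : ℕ)) - 1 := by
            refine Nat.sInf_le ⟨j, hjNS, ?_⟩
            have h1 := hdist (v : ℕ) j
            have h2 := hdist ((v : ℕ) - 1) j
            omega
          omega
        have hlb2 : gf v ≤ gf (⟨(v : ℕ) - 1, hvm⟩ : Fin n) + 1 :=
          Hstep _ v (by rw [hsymA]; exact hadjw)
        omega
      · -- step up
        have hjv' : (v : ℕ) < j := by omega
        have hwlt : (v : ℕ) + 1 < n := by omega
        have hwn : ((⟨(v : ℕ) + 1, hwlt⟩ : Fin n) : ℕ) ≠ n - 1 := by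
          show (v : ℕ) + 1 ≠ n - 1; omega
        have hadjw : 0 < A v ⟨(v : ℕ) + 1, hwlt⟩ := F2 _ _ (by simp)
        refine ⟨⟨(v : ℕ) + 1, hwlt⟩, hadjw, ?_⟩
        have hgw := hgfv _ hwn
        have hub2 : gf (⟨(v : ℕ) + 1, hwlt⟩ : Fin n) + 1 ≤ gf v := by
          rw [hgw, hgfv v hv]
          simp only [Fin.val_mk]
          have hmm : sInf (ds ((v : ℕ) + 1)) ≤ sInf (ds (v : ℕ)) - 1 := by
            refine Nat.sInf_le ⟨j, hjNS, ?_⟩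
            have h1 := hdist (v : ℕ) j
            have h2 := hdist ((v : ℕ) + 1) j
            omega
          omega
        have hlb2 : gf v ≤ gf (⟨(v : ℕ) + 1, hwlt⟩ : Fin n) + 1 :=
          Hstep _ v (by rw [hsymA]; exact hadjw)
        omega
  have Hpar : ∀ u v : Fin n, 0 < A u v → u ≠ L → v ≠ L →
      ((u : ℕ) + (v : ℕ)) % 2 = 1 := by
    intro u v huv huL hvL
    have hu : (u : ℕ) < n - 1 := by
      have := u.isLt
      have : (u : ℕ) ≠ n - 1 := fun hh => huL (Fin.ext hh)
      omega
    have hv : (v : ℕ) < n - 1 := by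
      have := v.isLt
      have : (v : ℕ) ≠ n - 1 := fun hh => hvL (Fin.ext hh)
      omega
    have := Fadj u v huv hu hv
    have := hdist (u : ℕ) (v : ℕ)
    omega
  -- upper bound for gf
  have hgub : ∀ v : Fin n, gf v ≤ c + 1 := by
    intro v
    by_cases hv : (v : ℕ) = n - 1
    · rw [hgfL v hv]; omega
    · rw [hgfv v hv]
      have hvlt : (v : ℕ) < n - 1 := by have := v.isLt; omega
      by_contra hgt
      push_neg at hgt
      have hfar : ∀ j ∈ NS, c < Nat.dist (v : ℕ) j := by
        intro j hj
        have := Nat.sInf_le (show Nat.dist (v : ℕ) j ∈ ds (v : ℕ) from ⟨j, hj, rfl⟩)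
        omega
      have hvc : c < (v : ℕ) := by
        have := hfar 0 h0NS
        have := hdist (v : ℕ) 0
        omega
      have hvc2 : (v : ℕ) + c < n - 2 := by
        have := hfar (n - 2) hn2NS
        have := hdist (v : ℕ) (n - 2)
        omega
      have hrun : (2 * c + 1) ∈ LSet := by
        refine ⟨(v : ℕ) - c, fun t ht => ?_⟩
        have hi1 : (v : ℕ) - c + t + 1 < n := by omega
        rw [hVNS _ hi1]
        intro hiNS
        have := hfar _ hiNS
        have := hdist (v : ℕ) ((v : ℕ) - c + t)
        omega
      have := hLm _ hrun
      omega
  -- the extremal vertex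
  have hexv : ∃ v0 : ℕ, v0 + 1 < n ∧ ∀ j ∈ NS, c ≤ Nat.dist v0 j := by
    rcases Nat.eq_zero_or_pos m with hm0 | hmpos
    · exact ⟨0, by omega, fun j _ => by rw [hcdef, hm0]; omega⟩
    · have hmem : m ∈ LSet := hmSup ▸ Nat.sSup_mem ⟨0, h0L⟩ hLBdd
      obtain ⟨a, ha⟩ := hmem
      have ha0 := hVle _ (ha 0 hmpos)
      have ham := hVle _ (ha (m - 1) (by omega))
      have hcm : 1 ≤ c ∧ c ≤ m := by rw [hcdef]; omega
      refine ⟨a + c - 1, by omega, fun j hj => ?_⟩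
      have hjV : j ∉ V := by
        intro hjV
        rw [hVNS j (by obtain ⟨h', -⟩ := hj; exact h')] at hjV
        exact hjV hj
      have hout : j < a ∨ a + m ≤ j := by
        by_contra hin
        push_neg at hin
        exact hjV (by have := ha (j - a) (by omega); rwa [show a + (j - a) = j by omega] at this)
      have := hdist (a + c - 1) j
      omega
  obtain ⟨v0, hv01, hfar0⟩ := hexv
  set i0 : Fin n := ⟨v0, by omega⟩ with hi0def
  have hi0L : i0 ≠ L := by
    intro h
    have : v0 = n - 1 := congrArg Fin.val h
    omega
  have hgi0 : gf i0 = c + 1 := by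
    have hub := hgub i0
    have hvn : (i0 : ℕ) ≠ n - 1 := by simp [hi0def]; omega
    rw [hgfv i0 hvn]
    rw [hgfv i0 hvn] at hub
    obtain ⟨j, hjNS, hjd⟩ := Nat.sInf_mem (hdsne (i0 : ℕ))
    have hge : c ≤ sInf (ds (i0 : ℕ)) := by
      rw [← hjd]
      exact hfar0 j hjNS
    omega
  -- the odd neighbor
  have hexw : ∃ w : Fin n, 0 < A i0 w ∧ w ≠ L ∧ ((i0 : ℕ) + (w : ℕ)) % 2 = 1 ∧
      gf i0 ≤ gf w + 1 := by
    rcases Nat.eq_zero_or_pos v0 with hv00 | hv0pos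
    · refine ⟨⟨1, by omega⟩, ?_, ?_, ?_, ?_⟩
      · exact F2 _ _ (by simp [hi0def, hv00])
      · intro h
        have : (1 : ℕ) = n - 1 := congrArg Fin.val h
        omega
      · simp [hi0def, hv00]
      · exact Hstep _ _ (by rw [hsymA]; exact F2 _ _ (by simp [hi0def, hv00]))
    · refine ⟨⟨v0 - 1, by omega⟩, ?_, ?_, ?_, ?_⟩
      · rw [hsymA]; exact F2 _ _ (by simp [hi0def]; omega)
      · intro h
        have : v0 - 1 = n - 1 := congrArg Fin.val h
        omega
      · simp [hi0def]; omega
      · exact Hstep _ _ (F2 _ _ (by simp [hi0def]; omega))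
  obtain ⟨w, hw1, hw2, hw3, hw4⟩ := hexw
  -- assemble
  show ExpIs A (2 * ((m + 1) / 2 + 1))
  rw [← hcdef]
  constructor
  · refine ⟨by omega, fun i j => ?_⟩
    exact upper hnnA hsymA F3 Hg0 Hdesc
      (le_trans (add_le_add (hgub i) (hgub j)) (by omega))
  · intro k hk
    by_contra hlt
    push_neg at hlt
    rcases Nat.even_or_odd k with he | ho
    · have hpos := hk.2 i0 w
      rcases invariant hnnA hsymA Hg0 Hstep Hpar hi0L k w hpos with hL | ⟨-, hp, -⟩
      · have hwge : c ≤ gf w := by omega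
        obtain ⟨ke, hke⟩ := he
        omega
      · obtain ⟨ke, hke⟩ := he
        omega
    · have hpos := hk.2 i0 i0
      rcases invariant hnnA hsymA Hg0 Hstep Hpar hi0L k i0 hpos with hL | ⟨-, hp, -⟩
      · omega
      · obtain ⟨ko, hko⟩ := ho
        omega
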